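/- For k ∈ (0,1), the derivative of K satisfies K'(k) = (E(k) - (1-k²)K(k)) / (k(1-k²)). -/

import Mathlib

open Real Set intervalIntegral

noncomputable def K (k : ℝ) : ℝ :=
  ∫ θ in (0:ℝ)..(Real.pi/2), 1 / Real.sqrt (1 - k^2 * Real.sin θ ^ 2)

noncomputable def E (k : ℝ) : ℝ :=
  ∫ θ in (0:ℝ)..(Real.pi/2), Real.sqrt (1 - k^2 * Real.sin θ ^ 2)

private lemma upos {x : ℝ} (hx : |x| < 1) (θ : ℝ) : 0 < 1 - x ^ 2 * Real.sin θ ^ 2 := by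
  have h1 : x ^ 2 < 1 := by nlinarith [sq_abs x, abs_nonneg x]
  nlinarith [Real.sin_sq_le_one θ, sq_nonneg x]

private lemma contu {x : ℝ} (hx : |x| < 1) :
    Continuous fun θ => 1 / Real.sqrt (1 - x ^ 2 * Real.sin θ ^ 2) := by
  apply Continuous.div continuous_const (by continuity)
  exact fun θ => (Real.sqrt_pos.2 (upos hx θ)).ne'

private lemma contD {x : ℝ} (hx : |x| < 1) :
    Continuous fun θ => x * Real.sin θ ^ 2 /
      ((1 - x ^ 2 * Real.sin θ ^ 2) * Real.sqrt (1 - x ^ 2 * Real.sin θ ^ 2)) := by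
  apply Continuous.div (by continuity) (by continuity)
  intro θ
  have hu := upos hx θ
  exact (mul_pos hu (Real.sqrt_pos.2 hu)).ne'

private lemma contG {x : ℝ} (hx : |x| < 1) :
    Continuous fun θ => (Real.cos θ ^ 2 - Real.sin θ ^ 2 + x ^ 2 * Real.sin θ ^ 4) /
      ((1 - x ^ 2 * Real.sin θ ^ 2) * Real.sqrt (1 - x ^ 2 * Real.sin θ ^ 2)) := by
  apply Continuous.div (by continuity) (by continuity)
  intro θ
  have hu := upos hx θ
  exact (mul_pos hu (Real.sqrt_pos.2 hu)).ne'

private lemma contC {x : ℝ} (hx : |x| < 1) :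
    Continuous fun θ => x ^ 2 * Real.cos θ ^ 2 / Real.sqrt (1 - x ^ 2 * Real.sin θ ^ 2) := by
  apply Continuous.div (by continuity) (by continuity)
  exact fun θ => (Real.sqrt_pos.2 (upos hx θ)).ne'

private lemma hderivx {x : ℝ} (hx : |x| < 1) (θ : ℝ) :
    HasDerivAt (fun y => 1 / Real.sqrt (1 - y ^ 2 * Real.sin θ ^ 2))
      (x * Real.sin θ ^ 2 /
        ((1 - x ^ 2 * Real.sin θ ^ 2) * Real.sqrt (1 - x ^ 2 * Real.sin θ ^ 2))) x := by
  have hu := upos hx θ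
  have hs : Real.sqrt (1 - x ^ 2 * Real.sin θ ^ 2) ^ 2 = 1 - x ^ 2 * Real.sin θ ^ 2 :=
    Real.sq_sqrt hu.le
  have hsp : 0 < Real.sqrt (1 - x ^ 2 * Real.sin θ ^ 2) := Real.sqrt_pos.2 hu
  have h1 : HasDerivAt (fun y : ℝ => 1 - y ^ 2 * Real.sin θ ^ 2)
      (-(2 * x * Real.sin θ ^ 2)) x := by
    have := ((hasDerivAt_pow 2 x).mul_const (Real.sin θ ^ 2)).const_sub 1
    simpa using this.congr_deriv (by ring)
  have h2 := (h1.sqrt hu.ne').inv hsp.ne'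
  simp only [one_div]
  refine h2.congr_deriv ?_
  rw [hs]
  field_simp

private lemma hptw' {k : ℝ} (hk : |k| < 1) (θ : ℝ) :
    k ^ 2 * Real.cos θ ^ 2 / Real.sqrt (1 - k ^ 2 * Real.sin θ ^ 2) -
      k * (1 - k ^ 2) * (k * Real.sin θ ^ 2 /
        ((1 - k ^ 2 * Real.sin θ ^ 2) * Real.sqrt (1 - k ^ 2 * Real.sin θ ^ 2)))
    = k ^ 2 * ((Real.cos θ ^ 2 - Real.sin θ ^ 2 + k ^ 2 * Real.sin θ ^ 4) /
        ((1 - k ^ 2 * Real.sin θ ^ 2) * Real.sqrt (1 - k ^ 2 * Real.sin θ ^ 2))) := by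
  have hu := upos hk θ
  have hsp : 0 < Real.sqrt (1 - k ^ 2 * Real.sin θ ^ 2) := Real.sqrt_pos.2 hu
  have hc : Real.sin θ ^ 2 + Real.cos θ ^ 2 = 1 := Real.sin_sq_add_cos_sq θ
  have hs : Real.sqrt (1 - k ^ 2 * Real.sin θ ^ 2) ^ 2 = 1 - k ^ 2 * Real.sin θ ^ 2 :=
    Real.sq_sqrt hu.le
  field_simp
  linear_combination (-(k ^ 4 * Real.sin θ ^ 2)) * hc

private lemma hderivθ {k : ℝ} (hk : |k| < 1) (θ : ℝ) :
    HasDerivAt (fun t => Real.sin t * Real.cos t / Real.sqrt (1 - k ^ 2 * Real.sin t ^ 2))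
      ((Real.cos θ ^ 2 - Real.sin θ ^ 2 + k ^ 2 * Real.sin θ ^ 4) /
        ((1 - k ^ 2 * Real.sin θ ^ 2) * Real.sqrt (1 - k ^ 2 * Real.sin θ ^ 2))) θ := by
  have hu := upos hk θ
  have hs : Real.sqrt (1 - k ^ 2 * Real.sin θ ^ 2) ^ 2 = 1 - k ^ 2 * Real.sin θ ^ 2 :=
    Real.sq_sqrt hu.le
  have hsp : 0 < Real.sqrt (1 - k ^ 2 * Real.sin θ ^ 2) := Real.sqrt_pos.2 hu
  have hnum : HasDerivAt (fun t => Real.sin t * Real.cos t)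
      (Real.cos θ ^ 2 - Real.sin θ ^ 2) θ := by
    have := (Real.hasDerivAt_sin θ).mul (Real.hasDerivAt_cos θ)
    exact this.congr_deriv (by ring)
  have hin : HasDerivAt (fun t : ℝ => 1 - k ^ 2 * Real.sin t ^ 2)
      (-(2 * k ^ 2 * Real.sin θ * Real.cos θ)) θ := by
    have := (((Real.hasDerivAt_sin θ).pow 2).const_mul (k ^ 2)).const_sub 1
    simpa using this.congr_deriv (by ring)
  have hden := hin.sqrt hu.ne'
  have h := hnum.div hden hsp.ne'
  refine h.congr_deriv ?_
  rw [hs]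
  have h2 : Real.sqrt (1 - k ^ 2 * Real.sin θ ^ 2) * Real.sqrt (1 - k ^ 2 * Real.sin θ ^ 2)
      = 1 - k ^ 2 * Real.sin θ ^ 2 := Real.mul_self_sqrt hu.le
  have hL : 1 - k ^ 2 * Real.sin θ ^ 2 ≠ 0 := hu.ne'
  generalize Real.sqrt (1 - k ^ 2 * Real.sin θ ^ 2) = S at *
  have hS0 : S ≠ 0 := hsp.ne'
  rw [div_eq_div_iff hL (mul_ne_zero hL hS0)]
  field_simp
  linear_combination ((1 - k ^ 2 * Real.sin θ ^ 2) * (Real.cos θ ^ 2 - Real.sin θ ^ 2)) * hs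

set_option maxHeartbeats 1000000 in
theorem deriv_K (k : ℝ) (hk : k ∈ Set.Ioo (0:ℝ) 1) :
    deriv K k = (E k - (1 - k^2) * K k) / (k * (1 - k^2)) := by
  obtain ⟨hk0, hk1⟩ := hk
  have hka : |k| < 1 := by rw [abs_of_pos hk0]; exact hk1
  set ε : ℝ := min (k / 2) ((1 - k) / 2) with hε
  have εpos : 0 < ε := by
    apply lt_min <;> linarith
  set b : ℝ := (1 + k) / 2 with hbdef
  have hb1 : b < 1 := by rw [hbdef]; linarith
  have hb0 : 0 < b := by rw [hbdef]; linarith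
  have hball : ∀ x ∈ Metric.ball k ε, 0 < x ∧ x < b := by
    intro x hx
    rw [Metric.mem_ball, Real.dist_eq, abs_sub_lt_iff] at hx
    have h1 : ε ≤ k / 2 := min_le_left _ _
    have h2 : ε ≤ (1 - k) / 2 := min_le_right _ _
    constructor <;> [linarith [hx.2]; · rw [hbdef]; linarith [hx.1]]
  -- Step A: differentiate under the integral sign
  have hb2 : 0 < 1 - b ^ 2 := by nlinarith
  have hKderiv : HasDerivAt K
      (∫ θ in (0:ℝ)..(Real.pi/2), k * Real.sin θ ^ 2 /
        ((1 - k ^ 2 * Real.sin θ ^ 2) * Real.sqrt (1 - k ^ 2 * Real.sin θ ^ 2))) k := by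
    have h := intervalIntegral.hasDerivAt_integral_of_dominated_loc_of_deriv_le
      (F := fun x θ => 1 / Real.sqrt (1 - x ^ 2 * Real.sin θ ^ 2))
      (F' := fun x θ => x * Real.sin θ ^ 2 /
        ((1 - x ^ 2 * Real.sin θ ^ 2) * Real.sqrt (1 - x ^ 2 * Real.sin θ ^ 2)))
      (bound := fun _ => 1 / ((1 - b ^ 2) * Real.sqrt (1 - b ^ 2)))
      (μ := MeasureTheory.volume) (a := (0:ℝ)) (b := Real.pi/2) (x₀ := k) (Metric.ball_mem_nhds k εpos)
      ?_ ?_ ?_ ?_ ?_ ?_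
    · exact h.2
    · filter_upwards [Metric.ball_mem_nhds k εpos] with x hx
      obtain ⟨hx0, hxb⟩ := hball x hx
      have : |x| < 1 := by rw [abs_of_pos hx0]; linarith
      exact (contu this).aestronglyMeasurable
    · exact (contu hka).intervalIntegrable _ _
    · exact ((contD hka).aestronglyMeasurable)
    · apply MeasureTheory.ae_of_all
      intro θ _ x hx
      obtain ⟨hx0, hxb⟩ := hball x hx
      have hxa : |x| < 1 := by rw [abs_of_pos hx0]; linarith
      have hu := upos hxa θ
      have hsp := Real.sqrt_pos.2 hu
      have hub : 1 - b ^ 2 ≤ 1 - x ^ 2 * Real.sin θ ^ 2 := by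
        nlinarith [Real.sin_sq_le_one θ, sq_nonneg (Real.sin θ), sq_nonneg x]
      have hsb : Real.sqrt (1 - b ^ 2) ≤ Real.sqrt (1 - x ^ 2 * Real.sin θ ^ 2) :=
        Real.sqrt_le_sqrt hub
      rw [Real.norm_eq_abs, abs_of_nonneg (by positivity)]
      apply div_le_div₀ (by norm_num)
      · nlinarith [Real.sin_sq_le_one θ, sq_nonneg (Real.sin θ)]
      · positivity
      · exact mul_le_mul hub hsb (Real.sqrt_nonneg _) hu.le
    · exact intervalIntegrable_const
    · apply MeasureTheory.ae_of_all
      intro θ _ x hx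
      obtain ⟨hx0, hxb⟩ := hball x hx
      have hxa : |x| < 1 := by rw [abs_of_pos hx0]; linarith
      exact hderivx hxa θ
  -- Step B: the integration-by-parts identity
  have hI2 : (∫ θ in (0:ℝ)..(Real.pi/2),
      (Real.cos θ ^ 2 - Real.sin θ ^ 2 + k ^ 2 * Real.sin θ ^ 4) /
        ((1 - k ^ 2 * Real.sin θ ^ 2) * Real.sqrt (1 - k ^ 2 * Real.sin θ ^ 2))) = 0 := by
    rw [intervalIntegral.integral_eq_sub_of_hasDerivAt (fun t _ => hderivθ hka t)
      ((contG hka).intervalIntegrable _ _)]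
    simp
  -- pointwise rewriting of E - (1-k²)K
  have hsqrtpos : ∀ θ : ℝ, 0 < Real.sqrt (1 - k ^ 2 * Real.sin θ ^ 2) :=
    fun θ => Real.sqrt_pos.2 (upos hka θ)
  have hE : E k - (1 - k ^ 2) * K k = ∫ θ in (0:ℝ)..(Real.pi/2),
      k ^ 2 * Real.cos θ ^ 2 / Real.sqrt (1 - k ^ 2 * Real.sin θ ^ 2) := by
    have e1 : E k = ∫ θ in (0:ℝ)..(Real.pi/2), Real.sqrt (1 - k ^ 2 * Real.sin θ ^ 2) := rfl
    have e2 : K k = ∫ θ in (0:ℝ)..(Real.pi/2), 1 / Real.sqrt (1 - k ^ 2 * Real.sin θ ^ 2) := rfl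
    rw [e1, e2, ← intervalIntegral.integral_const_mul, ← intervalIntegral.integral_sub
      ((by continuity : Continuous fun θ => Real.sqrt (1 - k ^ 2 * Real.sin θ ^ 2)).intervalIntegrable _ _)
      (((contu hka).intervalIntegrable _ _).const_mul (1 - k ^ 2))]
    apply intervalIntegral.integral_congr
    intro θ _
    have hu := upos hka θ
    have h2 : Real.sqrt (1 - k ^ 2 * Real.sin θ ^ 2) * Real.sqrt (1 - k ^ 2 * Real.sin θ ^ 2)
        = 1 - k ^ 2 * Real.sin θ ^ 2 := Real.mul_self_sqrt hu.le
    have hc : Real.sin θ ^ 2 + Real.cos θ ^ 2 = 1 := Real.sin_sq_add_cos_sq θ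
    have hs : Real.sqrt (1 - k ^ 2 * Real.sin θ ^ 2) ^ 2 = 1 - k ^ 2 * Real.sin θ ^ 2 :=
      Real.sq_sqrt hu.le
    field_simp
    linear_combination (-(k ^ 2)) * hc + hs
  -- combine
  have hkne : k * (1 - k ^ 2) ≠ 0 := mul_ne_zero hk0.ne' (by nlinarith)
  have hcomb : (∫ θ in (0:ℝ)..(Real.pi/2),
      k ^ 2 * Real.cos θ ^ 2 / Real.sqrt (1 - k ^ 2 * Real.sin θ ^ 2)) =
      k * (1 - k ^ 2) * ∫ θ in (0:ℝ)..(Real.pi/2), k * Real.sin θ ^ 2 /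
        ((1 - k ^ 2 * Real.sin θ ^ 2) * Real.sqrt (1 - k ^ 2 * Real.sin θ ^ 2)) := by
    rw [← sub_eq_zero, ← intervalIntegral.integral_const_mul, ← intervalIntegral.integral_sub
      ((contC hka).intervalIntegrable _ _)
      (((contD hka).intervalIntegrable _ _).const_mul (k * (1 - k ^ 2)))]
    rw [intervalIntegral.integral_congr (fun θ _ => hptw' hka θ),
      intervalIntegral.integral_const_mul, hI2, mul_zero]
  rw [hKderiv.deriv, hE, hcomb, mul_div_cancel_left₀ _ hkne]
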